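/- Let n₀ ∈ ℕ, σ ∈ 2^ℕ, and ((F_k,σ_k))_{k≥1} be a sequence with (F_k,σ_k) ∈ 𝒢ₛ_{n₀} for all k, satisfying: the F_k are pairwise disjoint; σ ≠ σ_k for all k; σ∧σ_1 ≠ ∅ and σ∧σ_k ⊏ σ∧σ_{k+1} for all k; and |σ∧σ_k| < min(F_k,σ_k) for all k. Then for every n ∈ ℕ and every nonempty G ∈ S_n, the pair (∪_{k∈G} F_k, σ) belongs to 𝒢ₛ_{n₀+n}, with min(∪_{k∈G} F_k, σ) = |σ∧σ_{min G}| and max(∪_{k∈G} F_k, σ) = |σ∧σ_{max G}|. -/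

import Mathlib

abbrev Cantor : Type := ℕ → Bool

/- `wedgeLen σ τ` is the length `|σ∧τ| ∈ ℕ∞` of the longest common initial segment
of `σ` and `τ` (`⊤` if `σ = τ`).  Since wedges `σ∧τ`, `σ∧τ'` of a common sequence are
initial segments of that sequence, comparisons `⊑`, `⊏`, `=` between such wedges are
equivalent to `≤`, `<`, `=` between their lengths. -/
open Classical in
noncomputable def wedgeLen (σ τ : Cantor) : ℕ∞ :=
  if h : σ = τ then ⊤ else ((Nat.find (Function.ne_iff.mp h) : ℕ) : ℕ∞)

/-- `GS n F σ m M` : the pair `(F,σ)` belongs to `𝒢ₛ_n` via a derivation attaching the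
values `min(F,σ) = m` and `max(F,σ) = M`. -/
inductive GS : ℕ → Finset Cantor → Cantor → ℕ∞ → ℕ∞ → Prop
  | base (d : ℕ) (τ : Fin (d + 1) → Cantor) (σ : Cantor) (F : Finset Cantor)
      (h1 : ∀ i, σ ≠ τ i)
      (h2 : 0 < wedgeLen σ (τ 0))
      (h3 : ∀ i j : Fin (d + 1), i < j → wedgeLen σ (τ i) < wedgeLen σ (τ j))
      (h4 : ((d + 1 : ℕ) : ℕ∞) ≤ wedgeLen σ (τ 0))
      (hF : ∀ x, x ∈ F ↔ ∃ i, x = τ i) :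
      GS 1 F σ (wedgeLen σ (τ 0)) (wedgeLen σ (τ (Fin.last d)))
  | up (n : ℕ) (F : Finset Cantor) (σ : Cantor) (m M : ℕ∞) :
      GS n F σ m M → GS (n + 1) F σ m M
  | skipped (n : ℕ) (d : ℕ) (Fs : Fin (d + 1) → Finset Cantor)
      (σs : Fin (d + 1) → Cantor) (mins maxs : Fin (d + 1) → ℕ∞)
      (σ : Cantor) (F : Finset Cantor)
      (hGS : ∀ i, GS n (Fs i) (σs i) (mins i) (maxs i))
      (hdisj : ∀ i j : Fin (d + 1), i ≠ j → ∀ x, x ∈ Fs i → x ∉ Fs j)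
      (hne : ∀ i, σ ≠ σs i)
      (h0 : 0 < wedgeLen σ (σs 0))
      (hmono : ∀ i j : Fin (d + 1), i < j → wedgeLen σ (σs i) < wedgeLen σ (σs j))
      (hlt : ∀ i, wedgeLen σ (σs i) < mins i)
      (hd : ((d + 1 : ℕ) : ℕ∞) ≤ wedgeLen σ (σs 0))
      (hF : ∀ x, x ∈ F ↔ ∃ i, x ∈ Fs i) :
      GS (n + 1) F σ (wedgeLen σ (σs 0)) (wedgeLen σ (σs (Fin.last d)))
  | attached (n : ℕ) (d : ℕ) (Fs : Fin (d + 1) → Finset Cantor)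
      (mins maxs : Fin (d + 1) → ℕ∞) (σ : Cantor) (F : Finset Cantor)
      (hGS : ∀ i, GS n (Fs i) σ (mins i) (maxs i))
      (hdisj : ∀ i j : Fin (d + 1), i ≠ j → ∀ x, x ∈ Fs i → x ∉ Fs j)
      (hord : ∀ i : Fin d, maxs i.castSucc < mins i.succ)
      (hd : ((d + 1 : ℕ) : ℕ∞) ≤ mins 0)
      (hF : ∀ x, x ∈ F ↔ ∃ i, x ∈ Fs i) :
      GS (n + 1) F σ (mins 0) (maxs (Fin.last d))

/-- The Schreier families `S_n` (for `n ≥ 1`; the value at `0` is a dummy). -/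
def Schreier : ℕ → Set (Finset ℕ)
  | 0 => {∅}
  | 1 => {F | ∀ k ∈ F, F.card ≤ k}
  | (n + 2) => {F | F = ∅ ∨ ∃ d : ℕ, ∃ Fs : Fin (d + 1) → Finset ℕ,
      (∀ i, Fs i ∈ Schreier (n + 1) ∧ (Fs i).Nonempty) ∧
      (∀ i : Fin d, ∀ a ∈ Fs i.castSucc, ∀ b ∈ Fs i.succ, a < b) ∧
      (∀ k ∈ Fs 0, d + 1 ≤ k) ∧
      (∀ x, x ∈ F ↔ ∃ i, x ∈ Fs i)}

lemma schreier_pos : ∀ n, ∀ G ∈ Schreier (n + 1), ∀ k ∈ G, 1 ≤ k := by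
  intro n
  induction n with
  | zero =>
    intro G hGmem k hk
    simp only [Schreier, Set.mem_setOf_eq] at hGmem
    exact le_trans (Finset.card_pos.mpr ⟨k, hk⟩) (hGmem k hk)
  | succ m ih =>
    intro G hGmem k hk
    simp only [Schreier, Set.mem_setOf_eq] at hGmem
    rcases hGmem with rfl | ⟨d, Fs, hFs, _, _, hmem⟩
    · simp at hk
    · obtain ⟨i, hi⟩ := (hmem k).mp hk
      exact ih (Fs i) (hFs i).1 k hi

theorem GS_skipped_schreier_union (n₀ : ℕ) (hn₀ : 1 ≤ n₀) (σ : Cantor)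
    (Fk : ℕ → Finset Cantor) (σk : ℕ → Cantor) (mins maxs : ℕ → ℕ∞)
    (hGS : ∀ k, 1 ≤ k → GS n₀ (Fk k) (σk k) (mins k) (maxs k))
    (hdisj : ∀ k l, 1 ≤ k → 1 ≤ l → k ≠ l → ∀ x, x ∈ Fk k → x ∉ Fk l)
    (hσ : ∀ k, 1 ≤ k → σ ≠ σk k)
    (h0 : 0 < wedgeLen σ (σk 1))
    (hmono : ∀ k, 1 ≤ k → wedgeLen σ (σk k) < wedgeLen σ (σk (k + 1)))
    (hlt : ∀ k, 1 ≤ k → wedgeLen σ (σk k) < mins k) :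
    ∀ n : ℕ, 1 ≤ n → ∀ G ∈ Schreier n, ∀ hG : G.Nonempty,
      ∀ U : Finset Cantor, (∀ x, x ∈ U ↔ ∃ k ∈ G, x ∈ Fk k) →
        GS (n₀ + n) U σ (wedgeLen σ (σk (G.min' hG)))
          (wedgeLen σ (σk (G.max' hG))) := by
  classical
  set w : ℕ → ℕ∞ := fun k => wedgeLen σ (σk k) with hwdef
  have wlt : ∀ k l, 1 ≤ k → k < l → w k < w l := by
    intro k l hk hkl
    induction l with
    | zero => omega
    | succ m ih =>
      rcases Nat.lt_or_ge k m with h | h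
      · exact (ih h).trans (hmono m (by omega))
      · have hkm : k = m := by omega
        subst hkm
        exact hmono k hk
  have wge : ∀ k : ℕ, 1 ≤ k → (k : ℕ∞) ≤ w k := by
    intro k hk
    induction k with
    | zero => omega
    | succ m ih =>
      rcases Nat.lt_or_ge 0 m with h | h
      · have h1 : ((m : ℕ∞) + 1) ≤ w (m + 1) :=
          (ENat.add_one_le_iff (by simp)).mpr (lt_of_le_of_lt (ih h) (hmono m h))
        simpa using h1
      · have hm : m = 0 := by omega
        subst hm
        simpa using (ENat.add_one_le_iff (m := 0) (by simp)).mpr h0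
  have wpos : ∀ k, 1 ≤ k → 0 < w k := by
    intro k hk
    rcases Nat.lt_or_ge 1 k with h | h
    · exact h0.trans (wlt 1 k le_rfl h)
    · have : k = 1 := by omega
      subst this; exact h0
  intro n hn
  induction n, hn using Nat.le_induction with
  | base =>
    intro G hGmem hG U hU
    have hcard : ∀ k ∈ G, G.card ≤ k := by
      simpa [Schreier] using hGmem
    obtain ⟨d, hcd⟩ : ∃ d, G.card = d + 1 :=
      ⟨G.card - 1, by have := hG.card_pos; omega⟩
    set e := G.orderEmbOfFin hcd with he
    have hemem : ∀ i, e i ∈ G := fun i => G.orderEmbOfFin_mem hcd i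
    have hpos : ∀ i, 1 ≤ e i := fun i => by
      have := hcard _ (hemem i); omega
    have key : GS (n₀ + 1) U σ (w (e 0)) (w (e (Fin.last d))) := by
      refine GS.skipped n₀ d (fun i => Fk (e i)) (fun i => σk (e i))
        (fun i => mins (e i)) (fun i => maxs (e i)) σ U
        (fun i => hGS _ (hpos i)) ?_ (fun i => hσ _ (hpos i))
        (wpos _ (hpos 0)) ?_ (fun i => hlt _ (hpos i)) ?_ ?_
      · intro i j hij x hx
        exact hdisj _ _ (hpos i) (hpos j) (fun hh => hij (e.injective hh)) x hx
      · intro i j hij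
        exact wlt _ _ (hpos i) (e.strictMono hij)
      · calc ((d + 1 : ℕ) : ℕ∞) ≤ ((e 0 : ℕ) : ℕ∞) :=
            Nat.cast_le.mpr (by have := hcard _ (hemem 0); omega)
          _ ≤ w (e 0) := wge _ (hpos 0)
      · intro x
        rw [hU x]
        constructor
        · rintro ⟨k, hk, hxk⟩
          have : k ∈ Set.range e := by rw [Finset.range_orderEmbOfFin]; exact hk
          obtain ⟨i, rfl⟩ := this
          exact ⟨i, hxk⟩
        · rintro ⟨i, hxi⟩
          exact ⟨e i, hemem i, hxi⟩
    have h0e : e 0 = G.min' hG := by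
      have := Finset.orderEmbOfFin_zero hcd (Nat.succ_pos d)
      simpa using this
    have hle : e (Fin.last d) = G.max' hG := by
      have := Finset.orderEmbOfFin_last hcd (Nat.succ_pos d)
      simpa [Fin.last] using this
    rw [← h0e, ← hle]
    exact key
  | succ n hn1 ih =>
    intro G hGmem hG U hU
    obtain ⟨m, rfl⟩ : ∃ m, n = m + 1 := ⟨n - 1, by omega⟩
    simp only [Schreier, Set.mem_setOf_eq] at hGmem
    rcases hGmem with rfl | ⟨d, Gs, hGsmem, hord, hd0, hmem⟩
    · exact absurd rfl hG.ne_empty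
    · have hne0 : ∀ i, (Gs i).Nonempty := fun i => (hGsmem i).2
      have hposG : ∀ i, ∀ k ∈ Gs i, 1 ≤ k := fun i k hk =>
        schreier_pos m (Gs i) (hGsmem i).1 k hk
      -- chain : elements of earlier blocks are strictly smaller
      have adj : ∀ i j : Fin (d + 1), (j : ℕ) = (i : ℕ) + 1 →
          ∀ a ∈ Gs i, ∀ b ∈ Gs j, a < b := by
        intro i j hij a ha b hb
        have hi : (i : ℕ) < d := by omega
        have hci : (⟨(i : ℕ), hi⟩ : Fin d).castSucc = i := by
          ext; simp
        have hsi : (⟨(i : ℕ), hi⟩ : Fin d).succ = j := by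
          ext; simp [hij]
        refine hord ⟨(i : ℕ), hi⟩ a ?_ b ?_
        · rw [hci]; exact ha
        · rw [hsi]; exact hb
      have chain : ∀ (c : ℕ) (i j : Fin (d + 1)), (j : ℕ) = (i : ℕ) + c + 1 →
          ∀ a ∈ Gs i, ∀ b ∈ Gs j, a < b := by
        intro c
        induction c with
        | zero => exact adj
        | succ c ihc =>
          intro i j hij a ha b hb
          have hj' : (i : ℕ) + c + 1 < d + 1 := by omega
          set j' : Fin (d + 1) := ⟨(i : ℕ) + c + 1, hj'⟩ with hj'def
          obtain ⟨x, hx⟩ := hne0 j'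
          exact (ihc i j' rfl a ha x hx).trans
            (adj j' j (by simp [hj'def]; omega) x hx b hb)
      have chain' : ∀ i j : Fin (d + 1), i < j →
          ∀ a ∈ Gs i, ∀ b ∈ Gs j, a < b := by
        intro i j hij a ha b hb
        have : (j : ℕ) = (i : ℕ) + ((j : ℕ) - (i : ℕ) - 1) + 1 := by
          have := (Fin.lt_iff_val_lt_val.mp hij); omega
        exact chain _ i j this a ha b hb
      have hmemG : ∀ i, ∀ a ∈ Gs i, a ∈ G := fun i a ha =>
        (hmem a).mpr ⟨i, ha⟩
      -- the pieces of U
      set Ui : Fin (d + 1) → Finset Cantor := fun i => (Gs i).biUnion Fk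
        with hUidef
      have hUimem : ∀ i x, x ∈ Ui i ↔ ∃ k ∈ Gs i, x ∈ Fk k := by
        intro i x; simp [hUidef, Finset.mem_biUnion]
      have hGSi : ∀ i, GS (n₀ + (m + 1)) (Ui i) σ (w ((Gs i).min' (hne0 i)))
          (w ((Gs i).max' (hne0 i))) := fun i =>
        ih (Gs i) (hGsmem i).1 (hne0 i) (Ui i) (hUimem i)
      have key : GS (n₀ + (m + 1) + 1) U σ (w ((Gs 0).min' (hne0 0)))
          (w ((Gs (Fin.last d)).max' (hne0 (Fin.last d)))) := by
        refine GS.attached (n₀ + (m + 1)) d Ui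
          (fun i => w ((Gs i).min' (hne0 i))) (fun i => w ((Gs i).max' (hne0 i)))
          σ U hGSi ?_ ?_ ?_ ?_
        · intro i j hij x hxi hxj
          obtain ⟨a, ha, hxa⟩ := (hUimem i x).mp hxi
          obtain ⟨b, hb, hxb⟩ := (hUimem j x).mp hxj
          have hab : a ≠ b := by
            rcases lt_or_gt_of_ne hij with h | h
            · exact Nat.ne_of_lt (chain' i j h a ha b hb)
            · exact Nat.ne_of_gt (chain' j i h b hb a ha)
          exact hdisj a b (hposG i a ha) (hposG j b hb) hab x hxa hxb
        · intro i
          exact wlt _ _ (hposG _ _ (Finset.max'_mem _ _))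
            (chain' i.castSucc i.succ (Fin.castSucc_lt_succ (i := i))
              _ (Finset.max'_mem _ _) _ (Finset.min'_mem _ _))
        · calc ((d + 1 : ℕ) : ℕ∞) ≤ (((Gs 0).min' (hne0 0) : ℕ) : ℕ∞) :=
              Nat.cast_le.mpr (hd0 _ (Finset.min'_mem _ _))
            _ ≤ w _ := wge _ (hposG _ _ (Finset.min'_mem _ _))
        · intro x
          rw [hU x]
          constructor
          · rintro ⟨k, hk, hxk⟩
            obtain ⟨i, hi⟩ := (hmem k).mp hk
            exact ⟨i, (hUimem i x).mpr ⟨k, hi, hxk⟩⟩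
          · rintro ⟨i, hxi⟩
            obtain ⟨k, hk, hxk⟩ := (hUimem i x).mp hxi
            exact ⟨k, hmemG i k hk, hxk⟩
      have hmin : G.min' hG = (Gs 0).min' (hne0 0) := by
        apply le_antisymm
        · exact Finset.min'_le _ _ (hmemG 0 _ (Finset.min'_mem _ _))
        · apply Finset.le_min'
          intro y hy
          obtain ⟨i, hi⟩ := (hmem y).mp hy
          rcases eq_or_ne i 0 with rfl | hi0
          · exact Finset.min'_le _ _ hi
          · have h0i : (0 : Fin (d + 1)) < i := by
              exact lt_of_le_of_ne (Fin.zero_le i) (Ne.symm hi0)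
            exact le_of_lt (chain' 0 i h0i _ (Finset.min'_mem _ _) y hi)
      have hmax : G.max' hG = (Gs (Fin.last d)).max' (hne0 (Fin.last d)) := by
        apply le_antisymm
        · apply Finset.max'_le
          intro y hy
          obtain ⟨i, hi⟩ := (hmem y).mp hy
          rcases eq_or_ne i (Fin.last d) with rfl | hi0
          · exact Finset.le_max' _ _ hi
          · have h0i : i < Fin.last d := lt_of_le_of_ne (Fin.le_last i) hi0
            exact le_of_lt (chain' i (Fin.last d) h0i y hi _ (Finset.max'_mem _ _))
        · exact Finset.le_max' _ _ (hmemG _ _ (Finset.max'_mem _ _))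
      rw [hmin, hmax]
      exact key
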